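/- The fraction of a disk lying inside a circle passing through its center is strictly decreasing in the disk's radius: let c and x be distinct points of the Euclidean plane and set R = dist(c,x) > 0. Then for all radii 0 < r₁ < r₂, volume(B̄(c,r₂) ∩ B̄(x,R)) · r₁² < volume(B̄(c,r₁) ∩ B̄(x,R)) · r₂²; equivalently, the proportion volume(B̄(c,r) ∩ B̄(x,R)) / volume(B̄(c,r)) of the disk B̄(c,r) contained in the disk B̄(x,R) (whose boundary circle passes through c) strictly decreases as r increases. -/

import Mathlib

open MeasureTheory
open scoped ENNReal RealInnerProductSpace

private lemma aux_dist_homothety {V : Type*} [NormedAddCommGroup V] [NormedSpace ℝ V]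
    (c : V) (k : ℝ) (p q : V) :
    dist (AffineMap.homothety c k p) (AffineMap.homothety c k q) = |k| * dist p q := by
  simp only [AffineMap.homothety_apply, vsub_eq_sub, vadd_eq_add, dist_eq_norm]
  have h : (k • (p - c) + c) - (k • (q - c) + c) = k • (p - q) := by
    rw [add_sub_add_right_eq_sub, ← smul_sub, sub_sub_sub_cancel_right]
  rw [h, norm_smul, Real.norm_eq_abs]

private lemma aux_homothety_inj {V : Type*} [NormedAddCommGroup V] [NormedSpace ℝ V]
    (c : V) {k : ℝ} (hk : k ≠ 0) : Function.Injective (AffineMap.homothety c k) := by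
  intro a b hab
  have h := aux_dist_homothety c k a b
  rw [hab, dist_self] at h
  have : dist a b = 0 := by
    have := abs_pos.2 hk
    nlinarith [dist_nonneg (x := a) (y := b)]
  exact dist_eq_zero.1 this

private lemma aux_homothety_image_closedBall {V : Type*} [NormedAddCommGroup V]
    [NormedSpace ℝ V] (c p : V) {k : ℝ} (hk : 0 < k) (t : ℝ) :
    AffineMap.homothety c k '' Metric.closedBall p t
      = Metric.closedBall (AffineMap.homothety c k p) (k * t) := by
  ext z
  constructor
  · rintro ⟨y, hy, rfl⟩
    rw [Metric.mem_closedBall] at hy ⊢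
    rw [aux_dist_homothety, abs_of_pos hk]
    exact mul_le_mul_of_nonneg_left hy hk.le
  · intro hz
    rw [Metric.mem_closedBall] at hz
    refine ⟨AffineMap.homothety c k⁻¹ z, ?_, ?_⟩
    · rw [Metric.mem_closedBall]
      have h1 : AffineMap.homothety c k⁻¹ (AffineMap.homothety c k p) = p := by
        rw [← AffineMap.homothety_mul_apply, inv_mul_cancel₀ hk.ne',
          AffineMap.homothety_one, AffineMap.id_apply]
      have h2 := aux_dist_homothety c k⁻¹ z (AffineMap.homothety c k p)
      rw [h1] at h2
      rw [h2, abs_of_pos (inv_pos.2 hk)]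
      calc k⁻¹ * dist z (AffineMap.homothety c k p) ≤ k⁻¹ * (k * t) :=
            mul_le_mul_of_nonneg_left hz (inv_pos.2 hk).le
        _ = t := by field_simp
    · rw [← AffineMap.homothety_mul_apply, mul_inv_cancel₀ hk.ne',
        AffineMap.homothety_one, AffineMap.id_apply]

set_option maxHeartbeats 1000000 in
theorem disk_fraction_inside_circle_through_center_strict_anti
    (c x : EuclideanSpace ℝ (Fin 2)) (hcx : c ≠ x)
    (r₁ r₂ : ℝ) (h₁ : 0 < r₁) (h₁₂ : r₁ < r₂) :
    volume (Metric.closedBall c r₂ ∩ Metric.closedBall x (dist c x)) *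
        ENNReal.ofReal (r₁ ^ 2)
      < volume (Metric.closedBall c r₁ ∩ Metric.closedBall x (dist c x)) *
          ENNReal.ofReal (r₂ ^ 2) := by
  have h₂ : 0 < r₂ := h₁.trans h₁₂
  set R := dist c x with hRdef
  have hR : 0 < R := dist_pos.2 hcx
  set t : ℝ := r₂ / r₁ with htdef
  have ht : 1 < t := (one_lt_div h₁).2 h₁₂
  have ht0 : 0 < t := lt_trans one_pos ht
  set x' : EuclideanSpace ℝ (Fin 2) := AffineMap.homothety c t x with hx'def
  -- the big ball with boundary through `c` contains the small one
  have hsub : Metric.closedBall x R ⊆ Metric.closedBall x' (t * R) := by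
    intro y hy
    rw [Metric.mem_closedBall] at hy ⊢
    have hxx' : dist x x' = (t - 1) * R := by
      rw [hx'def, dist_self_homothety, Real.norm_eq_abs, abs_of_nonpos (by linarith), ← hRdef]
      ring
    calc dist y x' ≤ dist y x + dist x x' := dist_triangle _ _ _
      _ ≤ R + (t - 1) * R := by rw [hxx']; linarith
      _ = t * R := by ring
  -- an explicit point of the big lens outside the small lens
  set d : EuclideanSpace ℝ (Fin 2) := x - c with hddef
  have hdnorm : ‖d‖ = R := by rw [hddef, ← dist_eq_norm, dist_comm, hRdef]
  set v : EuclideanSpace ℝ (Fin 2) :=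
    (WithLp.equiv 2 (Fin 2 → ℝ)).symm ![-(d 1), d 0] with hvdef
  have hdv : ⟪d, v⟫ = 0 := by
    rw [hvdef]
    simp [PiLp.inner_apply, Fin.sum_univ_two, WithLp.equiv_symm_apply]
    ring
  have hvnorm : ‖v‖ ^ 2 = R ^ 2 := by
    have h1 : ⟪v, v⟫ = ⟪d, d⟫ := by
      rw [hvdef, PiLp.inner_apply, PiLp.inner_apply]
      simp [PiLp.inner_apply, Fin.sum_univ_two, WithLp.equiv_symm_apply]
      ring
    rw [← real_inner_self_eq_norm_sq, h1, real_inner_self_eq_norm_sq, hdnorm]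
  have hnorm : ∀ α β : ℝ, ‖α • d + β • v‖ ^ 2 = (α ^ 2 + β ^ 2) * R ^ 2 := by
    intro α β
    rw [norm_add_sq_real, norm_smul, norm_smul, real_inner_smul_left,
      real_inner_smul_right, hdv, mul_pow, mul_pow, Real.norm_eq_abs,
      Real.norm_eq_abs, sq_abs, sq_abs, hdnorm, hvnorm]
    ring
  set ε : ℝ := min 1 (r₂ ^ 2 / (2 * R ^ 2 * (1 + t))) with hεdef
  have hε0 : 0 < ε := lt_min one_pos (by positivity)
  have hε1 : ε ≤ 1 := min_le_left _ _
  have hεR : ε * (1 + t) * R ^ 2 < r₂ ^ 2 := by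
    have h := min_le_right 1 (r₂ ^ 2 / (2 * R ^ 2 * (1 + t)))
    rw [← hεdef] at h
    rw [le_div_iff₀ (by positivity)] at h
    nlinarith [sq_nonneg R, sq_nonneg r₂]
  set b : ℝ := Real.sqrt (ε * (1 + t) - ε ^ 2) with hbdef
  have hb2 : b ^ 2 = ε * (1 + t) - ε ^ 2 := Real.sq_sqrt (by nlinarith)
  set p : EuclideanSpace ℝ (Fin 2) := ε • d + b • v + c with hpdef
  have hpc : p - c = ε • d + b • v := by rw [hpdef]; abel
  have hpx : p - x = (ε - 1) • d + b • v := by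
    have : x = d + c := by rw [hddef]; abel
    rw [hpdef, this, sub_smul, one_smul]; abel
  have hpx' : p - x' = (ε - t) • d + b • v := by
    have : x' = t • d + c := by
      rw [hx'def, AffineMap.homothety_apply, hddef]; simp
    rw [hpdef, this, sub_smul]; abel
  have hp1 : p ∈ Metric.ball c r₂ := by
    rw [Metric.mem_ball, dist_eq_norm, hpc]
    refine lt_of_pow_lt_pow_left₀ 2 h₂.le ?_
    rw [hnorm]
    nlinarith
  have hp2 : p ∉ Metric.closedBall x R := by
    rw [Metric.mem_closedBall, not_le, dist_eq_norm, hpx]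
    refine lt_of_pow_lt_pow_left₀ 2 (norm_nonneg _) ?_
    rw [hnorm]
    nlinarith [mul_pos (mul_pos hε0 (sub_pos.2 ht)) (pow_pos hR 2)]
  have hp3 : p ∈ Metric.ball x' (t * R) := by
    rw [Metric.mem_ball, dist_eq_norm, hpx']
    refine lt_of_pow_lt_pow_left₀ 2 (by positivity) ?_
    rw [hnorm]
    nlinarith [mul_pos (mul_pos hε0 (sub_pos.2 ht)) (pow_pos hR 2)]
  -- strict inequality of lens volumes
  set U : Set (EuclideanSpace ℝ (Fin 2)) :=
    Metric.ball c r₂ ∩ ((Metric.closedBall x R)ᶜ ∩ Metric.ball x' (t * R)) with hUdef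
  have hUopen : IsOpen U :=
    Metric.isOpen_ball.inter
      ((Metric.isClosed_closedBall).isOpen_compl.inter Metric.isOpen_ball)
  have hUpos : 0 < volume U :=
    hUopen.measure_pos volume ⟨p, hp1, hp2, hp3⟩
  have hfin : volume (Metric.closedBall c r₂ ∩ Metric.closedBall x R) ≠ ⊤ :=
    ((measure_mono Set.inter_subset_left).trans_lt (measure_closedBall_lt_top)).ne
  have hdisj : Disjoint (Metric.closedBall c r₂ ∩ Metric.closedBall x R) U :=
    Set.disjoint_left.2 fun y hy hyU => hyU.2.1 hy.2
  have hUsub : U ⊆ Metric.closedBall c r₂ ∩ Metric.closedBall x' (t * R) := fun y hy =>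
    ⟨Metric.ball_subset_closedBall hy.1, Metric.ball_subset_closedBall hy.2.2⟩
  have key2 : volume (Metric.closedBall c r₂ ∩ Metric.closedBall x R)
      < volume (Metric.closedBall c r₂ ∩ Metric.closedBall x' (t * R)) := by
    calc volume (Metric.closedBall c r₂ ∩ Metric.closedBall x R)
        < volume (Metric.closedBall c r₂ ∩ Metric.closedBall x R) + volume U :=
          ENNReal.lt_add_right hfin hUpos.ne'
      _ = volume ((Metric.closedBall c r₂ ∩ Metric.closedBall x R) ∪ U) :=
          (measure_union hdisj hUopen.measurableSet).symm
      _ ≤ volume (Metric.closedBall c r₂ ∩ Metric.closedBall x' (t * R)) :=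
          measure_mono (Set.union_subset
            (Set.inter_subset_inter_right _ hsub) hUsub)
  -- scaling: the small lens is the image of the big one under homothety of ratio r₁/r₂
  have hs0 : (0:ℝ) < t⁻¹ := inv_pos.2 ht0
  have himage : AffineMap.homothety c t⁻¹ ''
      (Metric.closedBall c r₂ ∩ Metric.closedBall x' (t * R))
        = Metric.closedBall c r₁ ∩ Metric.closedBall x R := by
    rw [Set.image_inter (aux_homothety_inj c hs0.ne'),
      aux_homothety_image_closedBall c c hs0,
      aux_homothety_image_closedBall c x' hs0,
      AffineMap.homothety_apply_same, hx'def, ← AffineMap.homothety_mul_apply,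
      inv_mul_cancel₀ ht0.ne', AffineMap.homothety_one, AffineMap.id_apply]
    have e1 : t⁻¹ * r₂ = r₁ := by rw [htdef]; field_simp
    have e2 : t⁻¹ * (t * R) = R := by field_simp
    rw [e1, e2]
  have key1 : volume (Metric.closedBall c r₁ ∩ Metric.closedBall x R)
      = ENNReal.ofReal ((t⁻¹) ^ 2) *
        volume (Metric.closedBall c r₂ ∩ Metric.closedBall x' (t * R)) := by
    rw [← himage, Measure.addHaar_image_homothety, finrank_euclideanSpace_fin,
      abs_of_pos (by positivity)]
  have e3 : ENNReal.ofReal (t⁻¹ ^ 2) *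
      volume (Metric.closedBall c r₂ ∩ Metric.closedBall x' (t * R)) *
        ENNReal.ofReal (r₂ ^ 2)
      = volume (Metric.closedBall c r₂ ∩ Metric.closedBall x' (t * R)) *
          ENNReal.ofReal (r₁ ^ 2) := by
    rw [mul_comm (ENNReal.ofReal (t⁻¹ ^ 2)) _, mul_assoc,
      ← ENNReal.ofReal_mul (by positivity)]
    congr 2
    rw [htdef]
    field_simp
  rw [key1, e3]
  rw [mul_comm _ (ENNReal.ofReal (r₁ ^ 2)), mul_comm _ (ENNReal.ofReal (r₁ ^ 2))]
  exact ENNReal.mul_lt_mul_right (ENNReal.ofReal_pos.2 (by positivity)).ne'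
    ENNReal.ofReal_ne_top key2
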